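/- Quadratic fixed-point iteration bound: let (K_m)_{m≥0} be a sequence of monotone increasing continuous functions on [0,T] with K_0(0) = 0, K_m ≤ K_{m+1} pointwise, satisfying K_{m+1}(t) ≤ K_0(t) + C K_m(t)² + C K_m(t) t^γ for all 0 < t ≤ T and m ≥ 0, where C > 0 and γ > 0. Then there exists 0 < τ ≤ T and a constant C' such that K_m(t) ≤ C' K_0(t) for all 0 ≤ t ≤ τ and all m. -/
import Mathlib


noncomputable section

/-- Quadratic fixed-point iteration bound: if `(K_m)` are monotone increasing continuous
functions on `[0,T]` with `K_0(0) = 0`, `K_m ≤ K_{m+1}`, satisfying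
`K_{m+1}(t) ≤ K_0(t) + C K_m(t)² + C K_m(t) t^γ`, then there exist `0 < τ ≤ T` and `C'` with
`K_m(t) ≤ C' K_0(t)` for all `t ∈ [0,τ]` and all `m`. -/
theorem quadratic_iteration_bound (T C γ : ℝ) (hT : 0 < T) (hC : 0 < C) (hγ : 0 < γ)
    (K : ℕ → ℝ → ℝ)
    (hcont : ∀ m, ContinuousOn (K m) (Set.Icc 0 T))
    (hmono : ∀ m, MonotoneOn (K m) (Set.Icc 0 T))
    (hnonneg : ∀ m, ∀ t ∈ Set.Icc (0 : ℝ) T, 0 ≤ K m t)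
    (hK0 : K 0 0 = 0)
    (hle : ∀ m, ∀ t ∈ Set.Icc (0 : ℝ) T, K m t ≤ K (m + 1) t)
    (hrec : ∀ m, ∀ t ∈ Set.Ioc (0 : ℝ) T,
      K (m + 1) t ≤ K 0 t + C * K m t ^ 2 + C * K m t * t ^ γ) :
    ∃ τ : ℝ, 0 < τ ∧ τ ≤ T ∧ ∃ C' > 0, ∀ m, ∀ t ∈ Set.Icc (0 : ℝ) τ,
      K m t ≤ C' * K 0 t := by
  classical
  have h0mem : (0:ℝ) ∈ Set.Icc (0:ℝ) T := ⟨le_refl _, hT.le⟩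
  have hc0 : ContinuousWithinAt (K 0) (Set.Icc 0 T) 0 := (hcont 0) 0 h0mem
  have hlim : Filter.Tendsto (K 0) (nhdsWithin 0 (Set.Icc 0 T)) (nhds 0) := by
    simpa [ContinuousWithinAt, hK0] using hc0
  have hεδ : ∀ ε > (0:ℝ), ∃ δ > (0:ℝ), ∀ t ∈ Set.Icc (0:ℝ) T, |t| < δ → K 0 t < ε := by
    intro ε hε
    rw [Metric.tendsto_nhdsWithin_nhds] at hlim
    obtain ⟨δ, hδ, h⟩ := hlim ε hε
    refine ⟨δ, hδ, fun t ht htδ => ?_⟩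
    have := h ht (by simpa [Real.dist_eq] using htδ)
    rw [Real.dist_eq, sub_zero] at this
    calc K 0 t ≤ |K 0 t| := le_abs_self _
    _ < ε := this
  obtain ⟨δ, hδpos, hδ⟩ := hεδ (1/(8*C)) (by positivity)
  set b : ℝ := (1/(4*C)) ^ (γ⁻¹) with hb
  have hbpos : 0 < b := Real.rpow_pos_of_pos (by positivity) _
  set τ : ℝ := min T (min (δ/2) b) with hτ
  have hτpos : 0 < τ := lt_min hT (lt_min (by linarith) hbpos)
  have hτT : τ ≤ T := min_le_left _ _
  have hτδ : τ < δ := lt_of_le_of_lt (le_trans (min_le_right _ _) (min_le_left _ _)) (by linarith)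
  have hτb : τ ≤ b := le_trans (min_le_right _ _) (min_le_right _ _)
  have hτmem : τ ∈ Set.Icc (0:ℝ) T := ⟨hτpos.le, hτT⟩
  have hK0τ : K 0 τ < 1/(8*C) := hδ τ hτmem (by rw [abs_of_pos hτpos]; exact hτδ)
  -- bound on t^γ
  have htγ : ∀ t ∈ Set.Ioc (0:ℝ) τ, t ^ γ ≤ 1/(4*C) := by
    intro t ht
    have h1 : t ^ γ ≤ b ^ γ := Real.rpow_le_rpow ht.1.le (le_trans ht.2 hτb) hγ.le
    have h2 : b ^ γ = 1/(4*C) := by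
      rw [hb, ← Real.rpow_mul (by positivity), inv_mul_cancel₀ hγ.ne', Real.rpow_one]
    rw [h2] at h1
    exact h1
  -- main induction
  have main : ∀ m, ∀ t ∈ Set.Ioc (0:ℝ) τ, K m t ≤ 2 * K 0 t := by
    intro m
    induction m with
    | zero =>
      intro t ht
      have := hnonneg 0 t ⟨ht.1.le, ht.2.trans hτT⟩
      linarith
    | succ n ih =>
      intro t ht
      have htT : t ∈ Set.Ioc (0:ℝ) T := ⟨ht.1, ht.2.trans hτT⟩
      have htmem : t ∈ Set.Icc (0:ℝ) T := ⟨ht.1.le, htT.2⟩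
      have h1 := hrec n t htT
      have h2 := ih t ht
      have hK0t : 0 ≤ K 0 t := hnonneg 0 t htmem
      have hKnt : 0 ≤ K n t := hnonneg n t htmem
      have hK0small : K 0 t ≤ 1/(8*C) :=
        le_trans (hmono 0 htmem hτmem ht.2) hK0τ.le
      have htg : t ^ γ ≤ 1/(4*C) := htγ t ht
      have htg0 : 0 ≤ t ^ γ := Real.rpow_nonneg ht.1.le _
      have h18 : (0:ℝ) ≤ 1 - K 0 t * (8*C) := by
        have := (le_div_iff₀ (by positivity : (0:ℝ) < 8*C)).mp hK0small
        linarith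
      have h14 : (0:ℝ) ≤ 1 - t ^ γ * (4*C) := by
        have := (le_div_iff₀ (by positivity : (0:ℝ) < 4*C)).mp htg
        linarith
      have e1 : C * K n t ^ 2 ≤ (1/2) * K 0 t := by
        nlinarith [mul_nonneg hK0t h18,
          mul_le_mul h2 h2 hKnt (by linarith : (0:ℝ) ≤ 2 * K 0 t), sq_nonneg (K n t)]
      have e2 : C * K n t * t ^ γ ≤ (1/2) * K 0 t := by
        nlinarith [mul_nonneg hK0t h14,
          mul_nonneg (mul_nonneg hC.le htg0) (by linarith : (0:ℝ) ≤ 2 * K 0 t - K n t)]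
      linarith
  -- t = 0 case
  have hzero : ∀ m, K m 0 ≤ 0 := by
    intro m
    by_contra h
    push_neg at h
    obtain ⟨δ', hδ'pos, hδ'⟩ := hεδ (K m 0 / 2) (by linarith)
    set s : ℝ := min τ (δ'/2) with hs
    have hs0 : 0 < s := lt_min hτpos (by linarith)
    have hsτ : s ≤ τ := min_le_left _ _
    have hsmem : s ∈ Set.Icc (0:ℝ) T := ⟨hs0.le, hsτ.trans hτT⟩
    have h1 : K m 0 ≤ K m s := hmono m h0mem hsmem hs0.le
    have h2 : K m s ≤ 2 * K 0 s := main m s ⟨hs0, hsτ⟩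
    have h3 : K 0 s < K m 0 / 2 := hδ' s hsmem (by
      rw [abs_of_pos hs0]
      calc s ≤ δ'/2 := min_le_right _ _
      _ < δ' := by linarith)
    linarith
  refine ⟨τ, hτpos, hτT, 2, by norm_num, fun m t ht => ?_⟩
  rcases eq_or_lt_of_le ht.1 with h0 | h0
  · subst h0
    rw [hK0]
    linarith [hzero m]
  · exact main m t ⟨h0, ht.2⟩
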